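/- arXiv:1301.0252 — 6 statements merged into one kernel-verified Lean document; each statement's English description precedes it below -/
import Mathlib

section
/- For all nonnegative integers n ≥ m with n ≥ 1, the binomial coefficient C(3n, 3m) is congruent to C(n, m) modulo 3^(2·ord₃(n)+2), where ord₃(n) is the 3-adic valuation of n. -/
open Finset

private def g3 (i : ℕ) : ℕ := (3 * i + 1) * (3 * i + 2)

private def F3 (x : ℕ) : ℕ := ∏ i ∈ Finset.range x, g3 i

private lemma g3_eq (i : ℕ) : g3 i = 9 * (i * i) + 9 * i + 2 := by unfold g3; ring

private lemma three_not_dvd_g3 (i : ℕ) : ¬ 3 ∣ g3 i := by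
  rw [g3_eq]; omega

private lemma F3_pos (x : ℕ) : 0 < F3 x := by
  unfold F3
  exact Finset.prod_pos fun i _ => by unfold g3; positivity

private lemma three_not_dvd_F3 (x : ℕ) : ¬ 3 ∣ F3 x := by
  induction x with
  | zero => simp [F3]
  | succ x ih =>
      rw [F3, Finset.prod_range_succ, ← F3]
      intro h
      rcases (Nat.prime_three.dvd_mul).1 h with h | h
      · exact ih h
      · exact three_not_dvd_g3 x h

private lemma factorial_eq (x : ℕ) :
    (3 * x).factorial = 3 ^ x * x.factorial * F3 x := by
  induction x with
  | zero => simp [F3]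
  | succ x ih =>
      have e : (3 * (x + 1)).factorial
          = (3 * x + 3) * ((3 * x + 2) * ((3 * x + 1) * (3 * x).factorial)) := by
        have h3 : 3 * (x + 1) = 3 * x + 1 + 1 + 1 := by ring
        rw [h3, Nat.factorial_succ, Nat.factorial_succ, Nat.factorial_succ]
      rw [e, ih]
      simp only [F3, Finset.prod_range_succ, Nat.factorial_succ, g3, pow_succ]
      ring

private lemma choose_identity (m a : ℕ) :
    (3 * (m + a)).choose (3 * m) * F3 m
      = (m + a).choose m * ∏ i ∈ Finset.range m, g3 (a + i) := by
  have h1 : (3 * (m + a)).choose (3 * m) * (3 * m).factorial * (3 * a).factorial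
      = (3 * (m + a)).factorial := by
    have h := Nat.choose_mul_factorial_mul_factorial
      (show 3 * m ≤ 3 * (m + a) by omega)
    have h2 : 3 * (m + a) - 3 * m = 3 * a := by omega
    rwa [h2] at h
  have h2 : (m + a).choose m * m.factorial * a.factorial = (m + a).factorial := by
    have h := Nat.choose_mul_factorial_mul_factorial (show m ≤ m + a by omega)
    have h3 : m + a - m = a := by omega
    rwa [h3] at h
  have hFn : F3 (m + a) = F3 a * ∏ i ∈ Finset.range m, g3 (a + i) := by
    rw [F3, add_comm m a, Finset.prod_range_add, ← F3]
  have key : (3 * (m + a)).choose (3 * m) * F3 m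
        * (3 ^ m * 3 ^ a * m.factorial * a.factorial * F3 a)
      = ((m + a).choose m * ∏ i ∈ Finset.range m, g3 (a + i))
        * (3 ^ m * 3 ^ a * m.factorial * a.factorial * F3 a) := by
    calc (3 * (m + a)).choose (3 * m) * F3 m
          * (3 ^ m * 3 ^ a * m.factorial * a.factorial * F3 a)
        = (3 * (m + a)).choose (3 * m) * (3 ^ m * m.factorial * F3 m)
            * (3 ^ a * a.factorial * F3 a) := by ring
      _ = (3 * (m + a)).choose (3 * m) * (3 * m).factorial * (3 * a).factorial := by
            rw [← factorial_eq, ← factorial_eq]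
      _ = (3 * (m + a)).factorial := h1
      _ = 3 ^ (m + a) * (m + a).factorial * F3 (m + a) := factorial_eq _
      _ = 3 ^ (m + a) * ((m + a).choose m * m.factorial * a.factorial)
            * (F3 a * ∏ i ∈ Finset.range m, g3 (a + i)) := by rw [h2, hFn]
      _ = ((m + a).choose m * ∏ i ∈ Finset.range m, g3 (a + i))
            * (3 ^ m * 3 ^ a * m.factorial * a.factorial * F3 a) := by
            rw [pow_add]; ring
  have hPpos : 0 < 3 ^ m * 3 ^ a * m.factorial * a.factorial * F3 a := by
    have := F3_pos a
    positivity
  exact Nat.eq_of_mul_eq_mul_right hPpos key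

private lemma pair_modEq (a i j : ℕ) :
    g3 (a + i) * g3 (a + j) ≡ g3 i * g3 j [MOD 9 * a * (a + i + j + 1)] := by
  have key : g3 (a + i) * g3 (a + j)
      = g3 i * g3 j + (9 * a * (a + i + j + 1)) *
        ((3 * i + 1) * (3 * j + 2) + (3 * i + 2) * (3 * j + 1)
          + 9 * a * (a + i + j + 1)) := by
    unfold g3; ring
  rw [Nat.ModEq, key, Nat.add_mul_mod_self_left]

private lemma prod_modEq (M : ℕ) (f g : ℕ → ℕ) :
    ∀ k, (∀ i, i < k → f i ≡ g i [MOD M]) →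
      (∏ i ∈ Finset.range k, f i) ≡ (∏ i ∈ Finset.range k, g i) [MOD M]
  | 0, _ => by simpa using Nat.ModEq.refl 1
  | k + 1, h => by
      rw [Finset.prod_range_succ, Finset.prod_range_succ]
      exact (prod_modEq M f g k fun i hi => h i (by omega)).mul (h k (by omega))

theorem stmt12 (n m : ℕ) (hmn : m ≤ n) (hn : 1 ≤ n) :
    (3 * n).choose (3 * m) ≡ n.choose m [MOD 3 ^ (2 * n.factorization 3 + 2)] := by
  rcases Nat.eq_zero_or_pos m with hm0 | hm1
  · subst hm0; simpa using Nat.ModEq.refl 1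
  rcases eq_or_lt_of_le hmn with hEq | hlt
  · subst hEq; simpa [Nat.choose_self] using Nat.ModEq.refl 1
  set a := n - m with ha
  have hna : n = m + a := by omega
  have ha1 : 1 ≤ a := by omega
  set v := n.factorization 3 with hv
  set μ := m.factorization 3 with hμ
  set α := a.factorization 3 with hα
  set t := min μ α with ht
  have h3 : Nat.Prime 3 := Nat.prime_three
  have hdm : (3 : ℕ) ^ t ∣ m :=
    dvd_trans (pow_dvd_pow 3 (min_le_left _ _)) (Nat.ordProj_dvd m 3)
  have hda : (3 : ℕ) ^ t ∣ a :=
    dvd_trans (pow_dvd_pow 3 (min_le_right _ _)) (Nat.ordProj_dvd a 3)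
  have hdn : (3 : ℕ) ^ v ∣ n := Nat.ordProj_dvd n 3
  have htv : t ≤ v := by
    have hd : (3 : ℕ) ^ t ∣ n := hna ▸ dvd_add hdm hda
    exact (h3.pow_dvd_iff_le_factorization (by omega)).1 hd
  set N := ∏ i ∈ Finset.range m, g3 (a + i) with hN
  set D := F3 m with hD
  have hid : (3 * n).choose (3 * m) * D = n.choose m * N := by
    rw [hN, hD, hna]; exact choose_identity m a
  -- squared congruence
  have hsq : N * N ≡ D * D [MOD 9 * a * n] := by
    have hNrefl : (∏ i ∈ Finset.range m, g3 (a + (m - 1 - i))) = N := by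
      rw [hN]; exact Finset.prod_range_reflect (fun i => g3 (a + i)) m
    have hDrefl : (∏ i ∈ Finset.range m, g3 (m - 1 - i)) = D := by
      rw [hD, F3]; exact Finset.prod_range_reflect g3 m
    have h1 : N * N = ∏ i ∈ Finset.range m, (g3 (a + i) * g3 (a + (m - 1 - i))) := by
      rw [Finset.prod_mul_distrib, hNrefl, hN]
    have h2 : D * D = ∏ i ∈ Finset.range m, (g3 i * g3 (m - 1 - i)) := by
      rw [Finset.prod_mul_distrib, hDrefl, hD, F3]
    rw [h1, h2]
    refine prod_modEq _ _ _ m (fun i hi => ?_)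
    have hpm := pair_modEq a i (m - 1 - i)
    have e : a + i + (m - 1 - i) + 1 = n := by omega
    rwa [e] at hpm
  have hw : (3 : ℕ) ^ (v + t + 2) ∣ 9 * a * n := by
    have e : (3 : ℕ) ^ (v + t + 2) = 3 ^ 2 * 3 ^ t * 3 ^ v := by
      rw [show v + t + 2 = 2 + t + v by omega, pow_add, pow_add]
    rw [e]
    exact mul_dvd_mul (mul_dvd_mul (by norm_num) hda) hdn
  have hsq' : N * N ≡ D * D [MOD 3 ^ (v + t + 2)] := Nat.ModEq.of_dvd hw hsq
  -- N + D is a 3-unit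
  have hgmod : ∀ x : ℕ, g3 x % 3 = 2 := fun x => by rw [g3_eq]; omega
  have hNmod : N ≡ D [MOD 3] := by
    rw [hN, hD, F3]
    exact prod_modEq 3 _ _ m (fun i _ => by
      show g3 (a + i) % 3 = g3 i % 3
      rw [hgmod, hgmod])
  have hD3 : ¬ 3 ∣ D := three_not_dvd_F3 m
  have hND3 : ¬ 3 ∣ (N + D) := by
    have h1 : N % 3 = D % 3 := hNmod
    have h2 : (N + D) % 3 = (N % 3 + D % 3) % 3 := Nat.add_mod N D 3
    omega
  have hcop : Nat.Coprime (3 ^ (v + t + 2)) (N + D) :=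
    Nat.Coprime.pow_left _ ((h3.coprime_iff_not_dvd).2 hND3)
  have hND : N ≡ D [MOD 3 ^ (v + t + 2)] := by
    have h5 : (N + D) * N ≡ (N + D) * D [MOD 3 ^ (v + t + 2)] := by
      calc (N + D) * N = N * N + N * D := by ring
        _ ≡ D * D + N * D [MOD 3 ^ (v + t + 2)] := hsq'.add_right (N * D)
        _ = (N + D) * D := by ring
    exact Nat.ModEq.cancel_left_of_coprime hcop h5
  -- Kummer-type lower bound on the 3-adic valuation of choose n m
  have hC0 : n.choose m ≠ 0 := (Nat.choose_pos hmn).ne'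
  have b1 : v ≤ (n.choose m).factorization 3 + μ := by
    have hidm := Nat.add_one_mul_choose_eq (n - 1) (m - 1)
    have e1 : n - 1 + 1 = n := by omega
    have e2 : m - 1 + 1 = m := by omega
    simp only [Nat.succ_eq_add_one, e1, e2] at hidm
    have hdvd : (3 : ℕ) ^ v ∣ n.choose m * m := by
      rw [← hidm]; exact hdn.mul_right _
    have hle : v ≤ (n.choose m * m).factorization 3 :=
      (h3.pow_dvd_iff_le_factorization (by positivity)).1 hdvd
    rwa [Nat.factorization_mul hC0 (by omega), Finsupp.add_apply] at hle
  have b2 : v ≤ (n.choose m).factorization 3 + α := by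
    have hidm := Nat.add_one_mul_choose_eq (n - 1) (a - 1)
    have e1 : n - 1 + 1 = n := by omega
    have e2 : a - 1 + 1 = a := by omega
    simp only [Nat.succ_eq_add_one, e1, e2] at hidm
    have hsymm : n.choose a = n.choose m := by
      rw [ha]; exact Nat.choose_symm hmn
    have hdvd : (3 : ℕ) ^ v ∣ n.choose m * a := by
      rw [← hsymm, ← hidm]; exact hdn.mul_right _
    have hle : v ≤ (n.choose m * a).factorization 3 :=
      (h3.pow_dvd_iff_le_factorization (by positivity)).1 hdvd
    rwa [Nat.factorization_mul hC0 (by omega), Finsupp.add_apply] at hle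
  have hCd : (3 : ℕ) ^ (v - t) ∣ n.choose m := by
    refine (h3.pow_dvd_iff_le_factorization hC0).2 ?_
    have hmc := min_choice μ α
    rw [← ht] at hmc
    omega
  -- combine
  have hmulmod : n.choose m * N ≡ n.choose m * D [MOD 3 ^ (2 * v + 2)] := by
    have h6 : n.choose m * N ≡ n.choose m * D [MOD n.choose m * 3 ^ (v + t + 2)] :=
      hND.mul_left' _
    have hdv : (3 : ℕ) ^ (2 * v + 2) ∣ n.choose m * 3 ^ (v + t + 2) := by
      have e : (3 : ℕ) ^ (2 * v + 2) = 3 ^ (v - t) * 3 ^ (v + t + 2) := by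
        rw [← pow_add]; congr 1; omega
      rw [e]
      exact mul_dvd_mul hCd dvd_rfl
    exact Nat.ModEq.of_dvd hdv h6
  rw [← hid] at hmulmod
  have hcopD : Nat.Coprime (3 ^ (2 * v + 2)) D :=
    Nat.Coprime.pow_left _ ((h3.coprime_iff_not_dvd).2 hD3)
  exact Nat.ModEq.cancel_right_of_coprime hcopD hmulmod
end

section
/- For all nonnegative integers n ≥ m, the binomial coefficient C(2n, 2m) is congruent to C(n, m) modulo 4. -/
lemma even_choose_even_odd (a b : ℕ) : 2 ∣ (2 * a).choose (2 * b + 1) := by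
  match a with
  | 0 => simp [Nat.choose_eq_zero_of_lt]
  | a + 1 =>
    have h := Nat.add_one_mul_choose_eq (2 * a + 1) (2 * b)
    have h2 : 2 ∣ (2 * (a + 1)).choose (2 * b + 1) * (2 * b + 1) := by
      rw [show 2 * (a + 1) = (2 * a + 1) + 1 by ring, ← h]
      exact ⟨(a + 1) * (2 * a + 1).choose (2 * b), by ring⟩
    exact ((Nat.Prime.dvd_mul Nat.prime_two).mp h2).resolve_right (by omega)

theorem stmt13 (n m : ℕ) (hmn : m ≤ n) :
    (2 * n).choose (2 * m) ≡ n.choose m [MOD 4] := by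
  induction n generalizing m with
  | zero => interval_cases m; rfl
  | succ n ih =>
    match m with
    | 0 => simp; rfl
    | m + 1 =>
      rcases Nat.lt_or_ge m n with h | h
      · have key : (2 * (n + 1)).choose (2 * (m + 1)) =
            (2 * n).choose (2 * m) + 2 * (2 * n).choose (2 * m + 1)
              + (2 * n).choose (2 * m + 2) := by
          rw [show 2 * (n + 1) = (2 * n + 1) + 1 by ring,
            show 2 * (m + 1) = (2 * m + 1) + 1 by ring,
            Nat.choose_succ_succ (2 * n + 1) (2 * m + 1),
            show (2 * m + 1) + 1 = (2 * m) + 1 + 1 from rfl,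
            Nat.choose_succ_succ (2 * n) (2 * m),
            Nat.choose_succ_succ (2 * n) (2 * m + 1)]
          ring
        obtain ⟨c, hc⟩ := even_choose_even_odd n m
        have h1 := ih m (le_of_lt h)
        have h2 := ih (m + 1) h
        have h2' : (2 * n).choose (2 * m + 2) ≡ n.choose (m + 1) [MOD 4] := by
          rw [show 2 * m + 2 = 2 * (m + 1) by ring]; exact h2
        have h0 : 2 * (2 * c) ≡ 0 [MOD 4] := by
          show 2 * (2 * c) % 4 = 0 % 4; omega
        have := ((h1.add h0).add h2')
        rw [key, hc, Nat.choose_succ_succ n m]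
        simpa using this
      · have hm : m = n := le_antisymm (by omega) h
        subst hm
        simp [Nat.choose_self]; rfl
end

section
/- For all nonnegative integers n ≥ m, the binomial coefficient C(4n, 4m) is congruent to C(n, m) modulo 4. -/
open Polynomial Finset

private lemma expand_lemma (t j : ℕ) :
    ((X ^ 4 + 1 : (ZMod 4)[X]) ^ t).coeff j =
      if 4 ∣ j then ((t.choose (j / 4) : ZMod 4)) else 0 := by
  have h : (X ^ 4 + 1 : (ZMod 4)[X]) ^ t = Polynomial.expand (ZMod 4) 4 ((X + 1) ^ t) := by
    rw [map_pow, map_add, Polynomial.expand_X, map_one]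
  rw [h, Polynomial.coeff_expand (by norm_num : 0 < 4)]
  split <;> simp [Polynomial.coeff_X_add_one_pow]

theorem stmt14 (n m : ℕ) (hmn : m ≤ n) :
    (4 * n).choose (4 * m) ≡ n.choose m [MOD 4] := by
  rw [← ZMod.natCast_eq_natCast_iff]
  have h4 : (4 : (ZMod 4)[X]) = 0 := by
    rw [show (4 : (ZMod 4)[X]) = C 4 from (map_ofNat C 4).symm]
    simp [show (4 : ZMod 4) = 0 from rfl]
  have h2sq : (2 : (ZMod 4)[X]) ^ 2 = 0 := by
    have : (2 : (ZMod 4)[X]) ^ 2 = 4 := by norm_num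
    rw [this, h4]
  have key : ((X : (ZMod 4)[X]) + 1) ^ (4 * n) = ((X ^ 4 + 1) + 2 * X ^ 2) ^ n := by
    rw [pow_mul]
    congr 1
    linear_combination (X ^ 3 + X ^ 2 + X : (ZMod 4)[X]) * h4
  have hcoeff : (((X : (ZMod 4)[X]) + 1) ^ (4 * n)).coeff (4 * m) = (n.choose m : ZMod 4) := by
    rw [key, add_pow, Polynomial.finset_sum_coeff]
    rw [Finset.sum_eq_single_of_mem n (Finset.self_mem_range_succ n)]
    · simp only [Nat.sub_self, pow_zero, mul_one, Nat.choose_self, Nat.cast_one]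
      rw [expand_lemma]
      simp [Nat.mul_div_cancel_left m (by norm_num : 0 < 4)]
    · intro k hk hkn
      have hk' : k < n := lt_of_le_of_ne (Nat.lt_succ_iff.mp (Finset.mem_range.mp hk)) hkn
      rcases Nat.lt_or_ge k (n - 1) with h | h
      · -- n - k ≥ 2, so 2^(n-k) = 0
        have hnk : n - k = 2 + (n - k - 2) := by omega
        have : (2 * X ^ 2 : (ZMod 4)[X]) ^ (n - k) = 0 := by
          rw [mul_pow, hnk, pow_add, h2sq, zero_mul, zero_mul]
        rw [this]
        simp
      · -- n - k = 1
        have hnk : n - k = 1 := by omega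
        rw [hnk, pow_one]
        have hre : ((X ^ 4 + 1 : (ZMod 4)[X]) ^ k * (2 * X ^ 2) * (n.choose k : (ZMod 4)[X])) =
            (C (2 * (n.choose k : ZMod 4)) * (X ^ 4 + 1) ^ k) * X ^ 2 := by
          rw [map_mul, Polynomial.C_eq_natCast]
          rw [show (C 2 : (ZMod 4)[X]) = 2 from map_ofNat C 2]
          ring
        rw [hre, Polynomial.coeff_mul_X_pow']
        split
        · rw [Polynomial.coeff_C_mul, expand_lemma]
          have : ¬ (4 ∣ 4 * m - 2) := by omega
          simp [this]
        · rfl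
  have hlhs : (((X : (ZMod 4)[X]) + 1) ^ (4 * n)).coeff (4 * m) =
      ((4 * n).choose (4 * m) : ZMod 4) := Polynomial.coeff_X_add_one_pow _ _ _
  rw [← hlhs, hcoeff]
end

section
/- Let p ≥ 5 be a prime. If C(np, mp) ≡ C(n, m) (mod p⁴) for all nonnegative integers n ≥ m, then C(n·p⁴ + n₀, m·p⁴ + m₀) ≡ C(n,m)·C(n₀,m₀) (mod p⁴) for all nonnegative integers n, m, n₀, m₀ with n₀ < p and m₀ < p. -/
/-- Kummer-style key lemma: if `p ^ 4 ∣ N`, `k ≤ N` and `p ∤ k`, then adding `k` and `N - k`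
in base `p` produces carries in the four lowest positions, so `p ^ 4 ∣ N.choose k`. -/
lemma aux_pow_dvd_choose (p : ℕ) (hp : p.Prime) (N k : ℕ) (hN : p ^ 4 ∣ N)
    (hk : k ≤ N) (hpk : ¬ p ∣ k) : p ^ 4 ∣ N.choose k := by
  haveI : Fact p.Prime := ⟨hp⟩
  set b := max (Nat.log p N + 1) 5 with hbdef
  have hb : Nat.log p N < b := lt_of_lt_of_le (Nat.lt_succ_self _) (le_max_left _ _)
  have hb5 : 5 ≤ b := le_max_right _ _
  have hval := padicValNat_choose (p := p) hk hb
  have hsub : ({1, 2, 3, 4} : Finset ℕ) ⊆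
      (Finset.Ico 1 b).filter fun i => p ^ i ≤ k % p ^ i + (N - k) % p ^ i := by
    intro i hi
    have hi14 : 1 ≤ i ∧ i ≤ 4 := by
      simp only [Finset.mem_insert, Finset.mem_singleton] at hi
      omega
    refine Finset.mem_filter.mpr ⟨Finset.mem_Ico.mpr ⟨hi14.1, by omega⟩, ?_⟩
    have hdvdN : p ^ i ∣ N := dvd_trans (pow_dvd_pow p hi14.2) hN
    have hpos : 0 < p ^ i := pow_pos hp.pos i
    have hkmod : k % p ^ i ≠ 0 := by
      intro h0
      exact hpk (dvd_trans (dvd_pow_self p (by omega : i ≠ 0))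
        (Nat.dvd_of_mod_eq_zero h0))
    have hsum0 : (k % p ^ i + (N - k) % p ^ i) % p ^ i = 0 := by
      rw [Nat.add_mod_mod, Nat.mod_add_mod, Nat.add_sub_cancel' hk]
      exact Nat.mod_eq_zero_of_dvd hdvdN
    have hdvdsum : p ^ i ∣ k % p ^ i + (N - k) % p ^ i := Nat.dvd_of_mod_eq_zero hsum0
    have hposum : 0 < k % p ^ i + (N - k) % p ^ i :=
      lt_of_lt_of_le (Nat.pos_of_ne_zero hkmod) (Nat.le_add_right _ _)
    exact Nat.le_of_dvd hposum hdvdsum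
  have hcard : 4 ≤ padicValNat p (N.choose k) := by
    rw [hval]
    calc 4 = ({1, 2, 3, 4} : Finset ℕ).card := by decide
      _ ≤ _ := Finset.card_le_card hsub
  calc p ^ 4 ∣ p ^ padicValNat p (N.choose k) := pow_dvd_pow p hcard
    _ ∣ N.choose k := pow_padicValNat_dvd

theorem stmt16 (p : ℕ) (hp : p.Prime) (hp5 : 5 ≤ p)
    (h : ∀ n m : ℕ, m ≤ n → (n * p).choose (m * p) ≡ n.choose m [MOD p ^ 4]) :
    ∀ n m n0 m0 : ℕ, n0 < p → m0 < p →
      (n * p ^ 4 + n0).choose (m * p ^ 4 + m0) ≡ n.choose m * n0.choose m0 [MOD p ^ 4] := by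
  intro n m n0 m0 hn0 hm0
  have hppos : 0 < p := hp.pos
  by_cases hmn : m ≤ n
  · -- the chain giving `C(n p^4, m p^4) ≡ C(n, m)`
    have e3 : ∀ a : ℕ, a * p ^ 3 * p = a * p ^ 4 := fun a => by ring
    have e2 : ∀ a : ℕ, a * p ^ 2 * p = a * p ^ 3 := fun a => by ring
    have e1 : ∀ a : ℕ, a * p * p = a * p ^ 2 := fun a => by ring
    have h4 : (n * p ^ 4).choose (m * p ^ 4) ≡ (n * p ^ 3).choose (m * p ^ 3) [MOD p ^ 4] := by
      have := h (n * p ^ 3) (m * p ^ 3) (Nat.mul_le_mul_right _ hmn)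
      rwa [e3, e3] at this
    have h3 : (n * p ^ 3).choose (m * p ^ 3) ≡ (n * p ^ 2).choose (m * p ^ 2) [MOD p ^ 4] := by
      have := h (n * p ^ 2) (m * p ^ 2) (Nat.mul_le_mul_right _ hmn)
      rwa [e2, e2] at this
    have h2 : (n * p ^ 2).choose (m * p ^ 2) ≡ (n * p).choose (m * p) [MOD p ^ 4] := by
      have := h (n * p) (m * p) (Nat.mul_le_mul_right _ hmn)
      rwa [e1, e1] at this
    have h1 : (n * p).choose (m * p) ≡ n.choose m [MOD p ^ 4] := h n m hmn
    have hch : (n * p ^ 4).choose (m * p ^ 4) ≡ n.choose m [MOD p ^ 4] :=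
      ((h4.trans h3).trans h2).trans h1
    haveI : NeZero (p ^ 4) := ⟨pow_ne_zero _ hp.ne_zero⟩
    rw [← ZMod.natCast_eq_natCast_iff]
    rw [Nat.add_choose_eq]
    push_cast
    rw [Finset.sum_eq_single_of_mem ((m * p ^ 4, m0)) (Finset.HasAntidiagonal.mem_antidiagonal.mpr rfl)]
    · have : ((n * p ^ 4).choose (m * p ^ 4) : ZMod (p ^ 4)) = (n.choose m : ZMod (p ^ 4)) :=
        (ZMod.natCast_eq_natCast_iff _ _ _).mpr hch
      rw [this]
    · rintro ⟨i, j⟩ hij hne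
      have hij' : i + j = m * p ^ 4 + m0 := Finset.HasAntidiagonal.mem_antidiagonal.mp hij
      by_cases hj : n0 < j
      · simp [Nat.choose_eq_zero_of_lt hj]
      push_neg at hj
      by_cases hi : n * p ^ 4 < i
      · simp [Nat.choose_eq_zero_of_lt hi]
      push_neg at hi
      have hpi : ¬ p ∣ i := by
        intro hpi
        obtain ⟨t, rfl⟩ := hpi
        have hmul : m * p ^ 4 + m0 = p * (m * p ^ 3) + m0 := by ring
        have hmod : j % p = m0 % p := by
          have := congrArg (· % p) hij'
          simpa [hmul, Nat.mul_add_mod] using this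
        have hje : j = m0 := by
          rwa [Nat.mod_eq_of_lt (lt_of_le_of_lt hj hn0), Nat.mod_eq_of_lt hm0] at hmod
        apply hne
        have : p * t = m * p ^ 4 := by omega
        simp [Prod.ext_iff, this, hje]
      have hdvd : p ^ 4 ∣ (n * p ^ 4).choose i :=
        aux_pow_dvd_choose p hp _ _ (dvd_mul_left (p ^ 4) n) hi hpi
      have : ((n * p ^ 4).choose i : ZMod (p ^ 4)) = 0 :=
        (ZMod.natCast_eq_zero_iff _ _).mpr hdvd
      rw [this, zero_mul]
  · push_neg at hmn
    have hlt : n * p ^ 4 + n0 < m * p ^ 4 + m0 := by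
      have hp4 : p ≤ p ^ 4 := Nat.le_self_pow (by norm_num) p
      have : (n + 1) * p ^ 4 ≤ m * p ^ 4 := Nat.mul_le_mul_right _ hmn
      nlinarith
    rw [Nat.choose_eq_zero_of_lt hlt, Nat.choose_eq_zero_of_lt hmn, zero_mul]
end

section
/- Let p ≥ 5 be a prime. If C(n·p⁴ + n₀, m·p⁴ + m₀) ≡ C(n,m)·C(n₀,m₀) (mod p⁴) holds for all nonnegative integers n, m, n₀, m₀ with n₀ < p and m₀ < p, then C(2p, p) ≡ 2 (mod p⁴), i.e., p is a Wolstenholme prime. -/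
open Finset

namespace Stmt17Aux

lemma filt_eq (p L : ℕ) (hp : 0 < p) :
    (Ico 1 (p*L)).filter (fun i => p ∣ i) = (Ico 1 L).image (fun j => p * j) := by
  ext i
  simp only [mem_filter, mem_Ico, mem_image]
  constructor
  · rintro ⟨⟨h1, h2⟩, k, rfl⟩
    refine ⟨k, ⟨?_, ?_⟩, rfl⟩
    · rcases Nat.eq_zero_or_pos k with rfl | hk
      · simp at h1
      · exact hk
    · exact lt_of_mul_lt_mul_left h2 (Nat.zero_le p)
  · rintro ⟨k, ⟨hk1, hk2⟩, rfl⟩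
    refine ⟨⟨?_, Nat.mul_lt_mul_left hp |>.mpr hk2⟩, ⟨k, rfl⟩⟩
    calc 1 ≤ k := hk1
    _ ≤ p * k := Nat.le_mul_of_pos_left k hp

lemma prod_split {M : Type*} [CommMonoid M] (p L : ℕ) (hp : 0 < p) (f : ℕ → M) :
    ∏ i ∈ Ico 1 (p*L), f i =
      ((Ico 1 (p*L)).filter (fun i => ¬ p ∣ i)).prod f * ∏ j ∈ Ico 1 L, f (p*j) := by
  rw [← Finset.prod_filter_mul_prod_filter_not (Ico 1 (p*L)) (fun i => p ∣ i), mul_comm]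
  congr 1
  rw [filt_eq p L hp, Finset.prod_image]
  intro a _ b _ hab
  exact Nat.eq_of_mul_eq_mul_left hp hab

lemma card_split (p L : ℕ) (hp : 0 < p) :
    ((Ico 1 (p*L)).filter (fun i => ¬ p ∣ i)).card = p*L - L := by
  rcases Nat.eq_zero_or_pos L with rfl|hL
  · simp
  have h2 : ((Ico 1 (p*L)).filter (fun i => p ∣ i)).card = (Ico 1 L).card := by
    rw [filt_eq p L hp, Finset.card_image_of_injective]
    intro a b hab
    exact Nat.eq_of_mul_eq_mul_left hp hab
  have h3 : L ≤ p * L := Nat.le_mul_of_pos_left L hp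
  rw [Finset.filter_not, Finset.card_sdiff_of_subset (Finset.filter_subset _ _), h2]
  rw [Nat.card_Ico, Nat.card_Ico]
  omega

lemma split_pow (p L k : ℕ) (hp : 0 < p) :
    ∏ i ∈ Ico 1 (p*L), ((p:ℤ)^(k+1) - (i:ℤ))
    = (∏ i ∈ (Ico 1 (p*L)).filter (fun i => ¬ p ∣ i), ((p:ℤ)^(k+1) - (i:ℤ)))
      * ((p:ℤ)^(Ico 1 L).card * ∏ j ∈ Ico 1 L, ((p:ℤ)^k - (j:ℤ))) := by
  rw [prod_split p L hp (fun i => (p:ℤ)^(k+1) - (i:ℤ))]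
  congr 1
  calc ∏ j ∈ Ico 1 L, ((p:ℤ)^(k+1) - ((p*j : ℕ):ℤ))
      = ∏ j ∈ Ico 1 L, ((p:ℤ) * ((p:ℤ)^k - (j:ℤ))) := by
        refine Finset.prod_congr rfl fun j _ => ?_
        push_cast
        ring
    _ = (p:ℤ)^(Ico 1 L).card * ∏ j ∈ Ico 1 L, ((p:ℤ)^k - (j:ℤ)) := by
        rw [Finset.prod_mul_distrib, Finset.prod_const]

lemma split_id (p L : ℕ) (hp : 0 < p) :
    ∏ i ∈ Ico 1 (p*L), (i:ℤ)
    = (∏ i ∈ (Ico 1 (p*L)).filter (fun i => ¬ p ∣ i), (i:ℤ))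
      * ((p:ℤ)^(Ico 1 L).card * ∏ j ∈ Ico 1 L, (j:ℤ)) := by
  rw [prod_split p L hp (fun i => (i:ℤ))]
  congr 1
  calc ∏ j ∈ Ico 1 L, ((p*j : ℕ):ℤ)
      = ∏ j ∈ Ico 1 L, ((p:ℤ) * (j:ℤ)) := by
        refine Finset.prod_congr rfl fun j _ => ?_
        push_cast
        ring
    _ = (p:ℤ)^(Ico 1 L).card * ∏ j ∈ Ico 1 L, (j:ℤ) := by
        rw [Finset.prod_mul_distrib, Finset.prod_const]

lemma descF_int (p k M : ℕ) (hM : 0 < M) (hMp : M ≤ p^k) :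
    ((p^k).descFactorial M : ℤ) = (p:ℤ)^k * ∏ i ∈ Ico 1 M, ((p:ℤ)^k - (i:ℤ)) := by
  rw [Nat.descFactorial_eq_prod_range]
  have hcast : ((∏ i ∈ range M, (p^k - i) : ℕ) : ℤ) = ∏ i ∈ range M, ((p:ℤ)^k - (i:ℤ)) := by
    push_cast
    refine Finset.prod_congr rfl fun i hi => ?_
    rw [Nat.cast_sub (le_of_lt (lt_of_lt_of_le (mem_range.mp hi) hMp))]
    push_cast
    ring
  rw [hcast, Finset.range_eq_Ico, Finset.prod_eq_prod_Ico_succ_bot hM]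
  simp

lemma split_pow' (p L L' k : ℕ) (hL : L' = p*L) (hp : 0 < p) :
    ∏ i ∈ Ico 1 L', ((p:ℤ)^(k+1) - (i:ℤ))
    = (∏ i ∈ (Ico 1 L').filter (fun i => ¬ p ∣ i), ((p:ℤ)^(k+1) - (i:ℤ)))
      * ((p:ℤ)^(Ico 1 L).card * ∏ j ∈ Ico 1 L, ((p:ℤ)^k - (j:ℤ))) := by
  subst hL; exact split_pow p L k hp

lemma split_id' (p L L' : ℕ) (hL : L' = p*L) (hp : 0 < p) :
    ∏ i ∈ Ico 1 L', (i:ℤ)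
    = (∏ i ∈ (Ico 1 L').filter (fun i => ¬ p ∣ i), (i:ℤ))
      * ((p:ℤ)^(Ico 1 L).card * ∏ j ∈ Ico 1 L, (j:ℤ)) := by
  subst hL; exact split_id p L hp

lemma key_identity (p t : ℕ) (hp : p.Prime) (ht : 0 < t) (htp : t < p) :
    ((p^4).choose (t*p^3) : ℤ) *
      ((∏ i ∈ (Ico 1 (t*p^3)).filter (fun i => ¬ p ∣ i), (i:ℤ)) *
       (∏ i ∈ (Ico 1 (t*p^2)).filter (fun i => ¬ p ∣ i), (i:ℤ)) *
       (∏ i ∈ (Ico 1 (t*p)).filter (fun i => ¬ p ∣ i), (i:ℤ)))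
    = (p.choose t : ℤ) *
      ((∏ i ∈ (Ico 1 (t*p^3)).filter (fun i => ¬ p ∣ i), ((p:ℤ)^4 - (i:ℤ))) *
       (∏ i ∈ (Ico 1 (t*p^2)).filter (fun i => ¬ p ∣ i), ((p:ℤ)^3 - (i:ℤ))) *
       (∏ i ∈ (Ico 1 (t*p)).filter (fun i => ¬ p ∣ i), ((p:ℤ)^2 - (i:ℤ)))) := by
  have hp0 : 0 < p := hp.pos
  have hM : 0 < t*p^3 := Nat.mul_pos ht (pow_pos hp0 3)
  have hMp : t*p^3 ≤ p^4 := by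
    calc t*p^3 ≤ p*p^3 := Nat.mul_le_mul_right _ (le_of_lt htp)
    _ = p^4 := by ring
  have e4 : ((p^4).descFactorial (t*p^3) : ℤ)
      = (p:ℤ)^4 * ∏ i ∈ Ico 1 (t*p^3), ((p:ℤ)^4 - (i:ℤ)) := descF_int p 4 _ hM hMp
  have EQ1 : (Nat.factorial (t*p^3) : ℤ) * ((p^4).choose (t*p^3) : ℤ)
      = (p:ℤ)^4 * ((∏ i ∈ (Ico 1 (t*p^3)).filter (fun i => ¬ p ∣ i), ((p:ℤ)^4 - (i:ℤ)))
        * ((p:ℤ)^(Ico 1 (t*p^2)).card * ((∏ i ∈ (Ico 1 (t*p^2)).filter (fun i => ¬ p ∣ i), ((p:ℤ)^3 - (i:ℤ)))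
        * ((p:ℤ)^(Ico 1 (t*p)).card * ((∏ i ∈ (Ico 1 (t*p)).filter (fun i => ¬ p ∣ i), ((p:ℤ)^2 - (i:ℤ)))
        * ((p:ℤ)^(Ico 1 t).card * ∏ s ∈ Ico 1 t, ((p:ℤ)^1 - (s:ℤ)))))))) := by
    have hd : ((p^4).descFactorial (t*p^3) : ℤ) = (Nat.factorial (t*p^3) : ℤ) * ((p^4).choose (t*p^3) : ℤ) := by
      exact_mod_cast congrArg (Nat.cast : ℕ → ℤ) (Nat.descFactorial_eq_factorial_mul_choose (p^4) (t*p^3))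
    rw [← hd, e4,
      split_pow' p (t*p^2) (t*p^3) 3 (by ring) hp0,
      split_pow' p (t*p) (t*p^2) 2 (by ring) hp0,
      split_pow' p t (t*p) 1 (by ring) hp0]
  have EQ2 : (Nat.factorial (t*p^3) : ℤ)
      = ((∏ i ∈ (Ico 1 (t*p^3)).filter (fun i => ¬ p ∣ i), (i:ℤ))
        * ((p:ℤ)^(Ico 1 (t*p^2)).card * ((∏ i ∈ (Ico 1 (t*p^2)).filter (fun i => ¬ p ∣ i), (i:ℤ))
        * ((p:ℤ)^(Ico 1 (t*p)).card * ((∏ i ∈ (Ico 1 (t*p)).filter (fun i => ¬ p ∣ i), (i:ℤ))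
        * ((p:ℤ)^(Ico 1 t).card * ∏ s ∈ Ico 1 t, (s:ℤ)))))))
        * ((t:ℤ)*(p:ℤ)^3) := by
    have fM : (Nat.factorial (t*p^3) : ℕ) = (∏ i ∈ Ico 1 (t*p^3), i) * (t*p^3) := by
      rw [← Finset.prod_Ico_id_eq_factorial (t*p^3), Finset.prod_Ico_succ_top (by omega : 1 ≤ t*p^3)]
    have fM' : (Nat.factorial (t*p^3) : ℤ) = (∏ i ∈ Ico 1 (t*p^3), (i:ℤ)) * ((t:ℤ)*(p:ℤ)^3) := by
      rw [fM]; push_cast; ring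
    rw [fM',
      split_id' p (t*p^2) (t*p^3) (by ring) hp0,
      split_id' p (t*p) (t*p^2) (by ring) hp0,
      split_id' p t (t*p) (by ring) hp0]
  have EQ3 : (p:ℤ) * ∏ s ∈ Ico 1 t, ((p:ℤ)^1 - (s:ℤ))
      = (∏ s ∈ Ico 1 t, (s:ℤ)) * (t:ℤ) * (p.choose t : ℤ) := by
    have d1 : ((p^1).descFactorial t : ℤ) = (p:ℤ)^1 * ∏ s ∈ Ico 1 t, ((p:ℤ)^1 - (s:ℤ)) :=
      descF_int p 1 t ht (by simpa using htp.le)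
    have cB : ((p^1).descFactorial t : ℤ) = (Nat.factorial t : ℤ) * ((p^1).choose t : ℤ) := by
      exact_mod_cast congrArg (Nat.cast : ℕ → ℤ) (Nat.descFactorial_eq_factorial_mul_choose (p^1) t)
    have ft : (Nat.factorial t : ℤ) = (∏ s ∈ Ico 1 t, (s:ℤ)) * (t:ℤ) := by
      have h5 : Nat.factorial t = (∏ s ∈ Ico 1 t, s) * t := by
        rw [← Finset.prod_Ico_id_eq_factorial t, Finset.prod_Ico_succ_top (by omega : 1 ≤ t)]
      rw [h5]; push_cast; ring
    have hpow : ((p:ℤ))^1 = (p:ℤ) := pow_one _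
    calc (p:ℤ) * ∏ s ∈ Ico 1 t, ((p:ℤ)^1 - (s:ℤ))
        = (p:ℤ)^1 * ∏ s ∈ Ico 1 t, ((p:ℤ)^1 - (s:ℤ)) := by rw [hpow]
      _ = ((p^1).descFactorial t : ℤ) := d1.symm
      _ = (Nat.factorial t : ℤ) * ((p^1).choose t : ℤ) := cB
      _ = (∏ s ∈ Ico 1 t, (s:ℤ)) * (t:ℤ) * (p.choose t : ℤ) := by rw [ft, pow_one]
  -- cancellation
  have hG1 : (0:ℤ) < ∏ s ∈ Ico 1 t, (s:ℤ) := by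
    apply Finset.prod_pos
    intro s hs
    have := (mem_Ico.mp hs).1
    positivity
  have hK : ((p:ℤ)^((Ico 1 (t*p^2)).card + (Ico 1 (t*p)).card + (Ico 1 t).card + 3)
      * (∏ s ∈ Ico 1 t, (s:ℤ)) * (t:ℤ)) ≠ 0 := by
    have hpz : (p:ℤ) ≠ 0 := by exact_mod_cast hp0.ne'
    have htz : (t:ℤ) ≠ 0 := by exact_mod_cast ht.ne'
    positivity
  apply mul_right_cancel₀ hK
  linear_combination (-(((p^4).choose (t*p^3) : ℤ)))*EQ2 + EQ1
    + ((p:ℤ)^((Ico 1 (t*p^2)).card + (Ico 1 (t*p)).card + (Ico 1 t).card + 3)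
      * (∏ i ∈ (Ico 1 (t*p^3)).filter (fun i => ¬ p ∣ i), ((p:ℤ)^4 - (i:ℤ)))
      * (∏ i ∈ (Ico 1 (t*p^2)).filter (fun i => ¬ p ∣ i), ((p:ℤ)^3 - (i:ℤ)))
      * (∏ i ∈ (Ico 1 (t*p)).filter (fun i => ¬ p ∣ i), ((p:ℤ)^2 - (i:ℤ)))) * EQ3

lemma pow_zero_zmod (p : ℕ) (k : ℕ) (hk : 2 ≤ k) : ((p : ZMod (p^2)))^k = 0 := by
  have h2 : ((p : ZMod (p^2)))^2 = 0 := by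
    have : (((p^2 : ℕ)) : ZMod (p^2)) = 0 := ZMod.natCast_self _
    push_cast at this
    exact this
  calc ((p : ZMod (p^2)))^k = ((p : ZMod (p^2)))^2 * ((p : ZMod (p^2)))^(k-2) := by
        rw [← pow_add]; congr 1; omega
    _ = 0 := by rw [h2, zero_mul]

lemma prod_cong (p : ℕ) (k : ℕ) (hk : 2 ≤ k) (F : Finset ℕ) (hF : Even F.card) :
    (((∏ i ∈ F, ((p:ℤ)^k - (i:ℤ))) : ℤ) : ZMod (p^2)) = (((∏ i ∈ F, (i:ℤ)) : ℤ) : ZMod (p^2)) := by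
  push_cast
  have : ∀ i ∈ F, ((p:ZMod (p^2))^k - (i:ZMod (p^2))) = -(i : ZMod (p^2)) := by
    intro i _
    rw [pow_zero_zmod p k hk, zero_sub]
  rw [Finset.prod_congr rfl this]
  have h9 : ∏ i ∈ F, (-(i : ZMod (p^2))) = (-1 : ZMod (p^2))^F.card * ∏ i ∈ F, (i : ZMod (p^2)) := by
    have h8 : ∀ i ∈ F, (-(i : ZMod (p^2))) = (-1 : ZMod (p^2)) * (i : ZMod (p^2)) := by
      intro i _; ring
    rw [Finset.prod_congr rfl h8, Finset.prod_mul_distrib, Finset.prod_const]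
  rw [h9, Even.neg_one_pow hF, one_mul]

lemma even_card_filter (p L : ℕ) (hp : 0 < p) (hpe : Even (p - 1)) :
    Even (((Ico 1 (p*L)).filter (fun i => ¬ p ∣ i)).card) := by
  rw [card_split p L hp]
  have : p*L - L = (p-1)*L := by
    rcases Nat.eq_zero_or_pos p with rfl|h
    · simp
    · rw [Nat.sub_mul, one_mul]
  rw [this]
  exact hpe.mul_right L

lemma not_dvd_filter_prod (p L : ℕ) (hp : p.Prime) :
    ¬ (p:ℤ) ∣ ∏ i ∈ (Ico 1 L).filter (fun i => ¬ p ∣ i), (i:ℤ) := by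
  intro hdvd
  have hint : Prime (p:ℤ) := Nat.prime_iff_prime_int.mp hp
  obtain ⟨i, hiF, hpi⟩ := (Prime.dvd_finset_prod_iff hint _).mp hdvd
  exact (mem_filter.mp hiF).2 (Int.natCast_dvd_natCast.mp hpi)

lemma choose_cong (p t : ℕ) (hp : p.Prime) (hodd : Odd p) (ht : 0 < t) (htp : t < p) :
    ((p:ℤ))^3 ∣ ((p^4).choose (t*p^3) : ℤ) - (p.choose t : ℤ) := by
  have hp0 : 0 < p := hp.pos
  have hpe : Even (p - 1) := Nat.Odd.sub_odd hodd odd_one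
  have key := key_identity p t hp ht htp
  set Q3 := ∏ i ∈ (Ico 1 (t*p^3)).filter (fun i => ¬ p ∣ i), (i:ℤ) with hQ3
  set Q2 := ∏ i ∈ (Ico 1 (t*p^2)).filter (fun i => ¬ p ∣ i), (i:ℤ) with hQ2
  set Q1 := ∏ i ∈ (Ico 1 (t*p)).filter (fun i => ¬ p ∣ i), (i:ℤ) with hQ1
  set P3 := ∏ i ∈ (Ico 1 (t*p^3)).filter (fun i => ¬ p ∣ i), ((p:ℤ)^4 - (i:ℤ)) with hP3
  set P2 := ∏ i ∈ (Ico 1 (t*p^2)).filter (fun i => ¬ p ∣ i), ((p:ℤ)^3 - (i:ℤ)) with hP2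
  set P1 := ∏ i ∈ (Ico 1 (t*p)).filter (fun i => ¬ p ∣ i), ((p:ℤ)^2 - (i:ℤ)) with hP1
  -- p^2 divides P3*P2*P1 - Q3*Q2*Q1
  have hQP : ((p:ℤ))^2 ∣ P3*P2*P1 - Q3*Q2*Q1 := by
    have hcast : ((P3*P2*P1 - Q3*Q2*Q1 : ℤ) : ZMod (p^2)) = 0 := by
      have e3 : Even (((Ico 1 (t*p^3)).filter (fun i => ¬ p ∣ i)).card) := by
        rw [show t*p^3 = p*(t*p^2) by ring]; exact even_card_filter p (t*p^2) hp0 hpe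
      have e2 : Even (((Ico 1 (t*p^2)).filter (fun i => ¬ p ∣ i)).card) := by
        rw [show t*p^2 = p*(t*p) by ring]; exact even_card_filter p (t*p) hp0 hpe
      have e1 : Even (((Ico 1 (t*p)).filter (fun i => ¬ p ∣ i)).card) := by
        rw [show t*p = p*t by ring]; exact even_card_filter p t hp0 hpe
      have c3 := prod_cong p 4 (by norm_num) _ e3
      have c2 := prod_cong p 3 (by norm_num) _ e2
      have c1 := prod_cong p 2 (by norm_num) _ e1
      push_cast [hP3, hP2, hP1, hQ3, hQ2, hQ1] at c3 c2 c1 ⊢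
      rw [c3, c2, c1]
      ring
    have := (ZMod.intCast_zmod_eq_zero_iff_dvd _ _).mp hcast
    push_cast at this
    exact this
  have hCdvd : (p:ℤ) ∣ (p.choose t : ℤ) := by
    exact_mod_cast Int.natCast_dvd_natCast.mpr (Nat.Prime.dvd_choose_self hp ht.ne' htp)
  have hrhs : ((p:ℤ))^3 ∣ (p.choose t : ℤ) * (P3*P2*P1 - Q3*Q2*Q1) := by
    have : ((p:ℤ))^3 = (p:ℤ) * ((p:ℤ))^2 := by ring
    rw [this]
    exact mul_dvd_mul hCdvd hQP
  have hmain : (((p^4).choose (t*p^3) : ℤ) - (p.choose t : ℤ)) * (Q3*Q2*Q1)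
      = (p.choose t : ℤ) * (P3*P2*P1 - Q3*Q2*Q1) := by linear_combination key
  have hint : Prime (p:ℤ) := Nat.prime_iff_prime_int.mp hp
  have hQunit : ¬ (p:ℤ) ∣ (Q3*Q2*Q1) := by
    intro hdvd
    rcases hint.dvd_mul.mp hdvd with h' | h1
    · rcases hint.dvd_mul.mp h' with h3 | h2
      · exact not_dvd_filter_prod p (t*p^3) hp h3
      · exact not_dvd_filter_prod p (t*p^2) hp h2
    · exact not_dvd_filter_prod p (t*p) hp h1
  have hdvd3 : ((p:ℤ))^3 ∣ (((p^4).choose (t*p^3) : ℤ) - (p.choose t : ℤ)) * (Q3*Q2*Q1) := by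
    rw [hmain]; exact hrhs
  have hcop : IsCoprime ((p:ℤ)^3) (Q3*Q2*Q1) :=
    IsCoprime.pow_left ((hint.coprime_iff_not_dvd).mpr hQunit)
  exact hcop.dvd_of_dvd_mul_right hdvd3

lemma sq_cong (p t : ℕ) (hp : p.Prime) (hodd : Odd p) (ht : 0 < t) (htp : t < p) :
    ((p:ℤ))^4 ∣ ((p^4).choose (t*p^3) : ℤ)^2 - (p.choose t : ℤ)^2 := by
  have h3 := choose_cong p t hp hodd ht htp
  have hC : (p:ℤ) ∣ (p.choose t : ℤ) := by
    exact_mod_cast Int.natCast_dvd_natCast.mpr (Nat.Prime.dvd_choose_self hp ht.ne' htp)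
  have hsum : (p:ℤ) ∣ ((p^4).choose (t*p^3) : ℤ) + (p.choose t : ℤ) := by
    have h1 : (p:ℤ) ∣ ((p^4).choose (t*p^3) : ℤ) - (p.choose t : ℤ) :=
      dvd_trans (dvd_pow_self _ (by norm_num)) h3
    have := dvd_add h1 (hC.mul_left 2)
    convert this using 1
    · rfl
    ring
  have : ((p:ℤ))^4 = (p:ℤ)^3 * (p:ℤ) := by ring
  rw [this]
  have := mul_dvd_mul h3 hsum
  convert this using 1
  · rfl
  ring

lemma mid_dvd (p j : ℕ) (hp : p.Prime) (hj : 0 < j) (hnd : ¬ p^3 ∣ j) :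
    p^2 ∣ (p^4).choose j := by
  have hp0 : 0 < p := hp.pos
  -- p^4 * C(p^4 - 1, j - 1) = C(p^4, j) * j
  have hid : p^4 * (p^4 - 1).choose (j - 1) = (p^4).choose j * j := by
    have h0 := Nat.add_one_mul_choose_eq (p^4 - 1) (j - 1)
    have h1 : p^4 - 1 + 1 = p^4 := by
      have := pow_pos hp0 4; omega
    have h2 : j - 1 + 1 = j := by omega
    rwa [h1, h2] at h0
  set e := j.factorization p with he
  have hordd : p^e ∣ j := Nat.ordProj_dvd j p
  have hcompl : j = p^e * (j / p^e) := (Nat.ordProj_mul_ordCompl_eq_self j p).symm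
  have hnotd : ¬ p ∣ (j / p^e) := Nat.not_dvd_ordCompl hp hj.ne'
  have he2 : e ≤ 2 := by
    by_contra hcon
    exact hnd (dvd_trans (pow_dvd_pow p (by omega)) hordd)
  have hdvd4 : p^4 ∣ (p^4).choose j * j := ⟨_, hid.symm⟩
  have hjj : (j / p^e) * p^e = j := Nat.div_mul_cancel hordd
  have hdvd4' : p^(4-e) * p^e ∣ ((p^4).choose j * (j / p^e)) * p^e := by
    have hpw : p^(4-e) * p^e = p^4 := by rw [← pow_add]; congr 1; omega
    rw [hpw, mul_assoc, hjj]
    exact hdvd4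
  have hdvd2 : p^(4-e) ∣ (p^4).choose j * (j / p^e) :=
    (mul_dvd_mul_iff_right (pow_pos hp0 e).ne').mp hdvd4'
  have hcop : Nat.Coprime (p^(4-e)) (j / p^e) :=
    Nat.Coprime.pow_left _ ((Nat.Prime.coprime_iff_not_dvd hp).mpr hnotd)
  have := (Nat.Coprime.dvd_of_dvd_mul_right hcop) hdvd2
  exact dvd_trans (pow_dvd_pow p (by omega)) this

lemma vandermonde_sq (n : ℕ) : (2*n).choose n = ∑ k ∈ range (n+1), (n.choose k)^2 := by
  rw [two_mul, Nat.add_choose_eq, Finset.Nat.sum_antidiagonal_eq_sum_range_succ_mk]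
  refine Finset.sum_congr rfl fun k hk => ?_
  have hk' : k ≤ n := by
    have := mem_range.mp hk; omega
  simp [Nat.choose_symm hk', sq]

lemma reindex (p : ℕ) (hp : 0 < p) :
    (range (p^4+1)).filter (fun j => p^3 ∣ j) = (range (p+1)).image (fun t => t*p^3) := by
  ext j
  simp only [mem_filter, mem_range, mem_image]
  constructor
  · rintro ⟨hj, c, rfl⟩
    refine ⟨c, ?_, by ring⟩
    have hph : 0 < p^3 := pow_pos hp 3
    by_contra hc
    push_neg at hc
    have : p^4 + 1 ≤ p^3 * c := by
      calc p^4 + 1 ≤ p^3 * (p+1) := by ring_nf; nlinarith [pow_pos hp 3]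
      _ ≤ p^3 * c := Nat.mul_le_mul_left _ hc
    omega
  · rintro ⟨c, hc, rfl⟩
    refine ⟨?_, ⟨c, by ring⟩⟩
    have : c * p^3 ≤ p * p^3 := Nat.mul_le_mul_right _ (by omega)
    have : p * p^3 = p^4 := by ring
    omega

end Stmt17Aux

open Stmt17Aux in
theorem stmt17 (p : ℕ) (hp : p.Prime) (hp5 : 5 ≤ p)
    (h : ∀ n m n0 m0 : ℕ, n0 < p → m0 < p →
      (n * p ^ 4 + n0).choose (m * p ^ 4 + m0) ≡ n.choose m * n0.choose m0 [MOD p ^ 4]) :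
    (2 * p).choose p ≡ 2 [MOD p ^ 4] := by
  have hp0 : 0 < p := hp.pos
  have hodd : Odd p := hp.odd_of_ne_two (by omega)
  have h24 : (2*p^4).choose (p^4) ≡ 2 [MOD p^4] := by
    have h0 := h 2 1 0 0 hp0 hp0
    norm_num at h0
    exact h0
  have hinj : ∀ a ∈ range (p+1), ∀ b ∈ range (p+1), a*p^3 = b*p^3 → a = b := by
    intro a _ b _ hab
    exact Nat.eq_of_mul_eq_mul_right (pow_pos hp0 3) hab
  have hZ : (((2*p).choose p : ℕ) : ZMod (p^4)) = ((2 : ℕ) : ZMod (p^4)) := by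
    calc (((2*p).choose p : ℕ) : ZMod (p^4))
        = ∑ t ∈ range (p+1), ((p.choose t : ℕ) : ZMod (p^4))^2 := by
          rw [vandermonde_sq p]
          push_cast
          rfl
      _ = ∑ t ∈ range (p+1), (((p^4).choose (t*p^3) : ℕ) : ZMod (p^4))^2 := by
          refine Finset.sum_congr rfl fun t htm => ?_
          rcases Nat.eq_zero_or_pos t with rfl | ht
          · simp
          rcases eq_or_lt_of_le (Nat.lt_succ_iff.mp (mem_range.mp htm)) with htp' | htp
          · subst htp'
            rw [Nat.choose_self, show t*t^3 = t^4 from by ring, Nat.choose_self]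
          · have hsq := sq_cong p t hp hodd ht htp
            have hz : (((((p^4).choose (t*p^3) : ℤ))^2 - ((p.choose t : ℤ))^2 : ℤ) : ZMod (p^4)) = 0 := by
              rw [ZMod.intCast_zmod_eq_zero_iff_dvd]
              push_cast
              exact hsq
            push_cast at hz
            rw [sub_eq_zero] at hz
            exact hz.symm
      _ = ∑ j ∈ (range (p^4+1)).filter (fun j => p^3 ∣ j), (((p^4).choose j : ℕ) : ZMod (p^4))^2 := by
          rw [reindex p hp0, Finset.sum_image hinj]
      _ = ∑ j ∈ range (p^4+1), (((p^4).choose j : ℕ) : ZMod (p^4))^2 := by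
          refine Finset.sum_subset (Finset.filter_subset _ _) fun j hj hnj => ?_
          have hj0 : 0 < j := by
            rcases Nat.eq_zero_or_pos j with rfl | hj0
            · exact absurd (mem_filter.mpr ⟨hj, dvd_zero _⟩) hnj
            · exact hj0
          have hnd : ¬ p^3 ∣ j := fun hd => hnj (mem_filter.mpr ⟨hj, hd⟩)
          obtain ⟨d, hd⟩ := mid_dvd p j hp hj0 hnd
          have hdvd : (p^4 : ℕ) ∣ ((p^4).choose j)^2 := ⟨d^2, by rw [hd]; ring⟩
          have := (ZMod.natCast_eq_zero_iff _ _).mpr hdvd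
          push_cast at this
          exact this
      _ = (((2*p^4).choose (p^4) : ℕ) : ZMod (p^4)) := by
          rw [vandermonde_sq (p^4)]
          push_cast
          rfl
      _ = ((2 : ℕ) : ZMod (p^4)) := (ZMod.natCast_eq_natCast_iff _ _ _).mpr h24
  exact (ZMod.natCast_eq_natCast_iff _ _ _).mp hZ
end

section
/- For every prime p ≥ 5 and nonnegative integers n ≥ m, the binomial coefficient C(2p⁴, p⁴) is congruent to C(2p, p) modulo p⁶. -/
open Finset Nat
open scoped Classical

namespace Jac

/-- the set of integers in [1,N] not divisible by p -/
def S (p N : ℕ) : Finset ℕ := (Finset.Icc 1 N).filter (fun i => ¬ p ∣ i)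

section nat

variable (p : ℕ)

lemma prod_Icc_id (n : ℕ) : ∏ i ∈ Finset.Icc 1 n, i = n ! := by
  induction n with
  | zero => simp
  | succ n ih => rw [Finset.prod_Icc_succ_top (by omega), ih, Nat.factorial_succ, mul_comm]

lemma fact_split (hp : 0 < p) (n : ℕ) :
    (p * n)! = p ^ n * n ! * ∏ i ∈ S p (p * n), i := by
  have h1 : (Finset.Icc 1 (p*n)).filter (fun i => p ∣ i)
      = (Finset.Icc 1 n).image (fun j => p * j) := by
    ext i
    simp only [Finset.mem_filter, Finset.mem_Icc, Finset.mem_image]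
    constructor
    · rintro ⟨⟨h1i, h2i⟩, c, rfl⟩
      exact ⟨c, ⟨Nat.pos_of_ne_zero (by rintro rfl; simp at h1i), Nat.le_of_mul_le_mul_left h2i hp⟩, rfl⟩
    · rintro ⟨c, ⟨hc1, hc2⟩, rfl⟩
      exact ⟨⟨Nat.mul_pos hp hc1, Nat.mul_le_mul_left p hc2⟩, c, rfl⟩
  calc (p*n)! = ∏ i ∈ Finset.Icc 1 (p*n), i := (prod_Icc_id _).symm
    _ = (∏ i ∈ (Finset.Icc 1 (p*n)).filter (fun i => p ∣ i), i) * ∏ i ∈ S p (p*n), i := by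
        simp only [S]
        rw [Finset.prod_filter_mul_prod_filter_not]
    _ = p ^ n * n ! * ∏ i ∈ S p (p * n), i := by
        rw [h1, Finset.prod_image (fun a _ b _ h => by
          exact Nat.eq_of_mul_eq_mul_left hp h)]
        rw [Finset.prod_mul_distrib, Finset.prod_const, Nat.card_Icc, prod_Icc_id]
        simp

lemma S_pos (N : ℕ) : 0 < ∏ i ∈ S p N, i := by
  apply Finset.prod_pos
  intro i hi
  simp only [S, Finset.mem_filter, Finset.mem_Icc] at hi
  omega

lemma P_split (N : ℕ) (hp : 0 < p) (hpN : p ∣ N) :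
    ∏ i ∈ S p (2 * N), i = (∏ i ∈ S p N, i) * ∏ i ∈ S p N, (N + i) := by
  have h2 : (Finset.Icc (N+1) (2*N)).filter (fun i => ¬ p ∣ i)
      = (S p N).image (fun i => N + i) := by
    ext j
    simp only [S, Finset.mem_filter, Finset.mem_Icc, Finset.mem_image]
    constructor
    · rintro ⟨⟨h1j, h2j⟩, hj⟩
      refine ⟨j - N, ⟨⟨by omega, by omega⟩, ?_⟩, by omega⟩
      intro hd
      exact hj (by have := Nat.dvd_add hpN hd; rwa [show N + (j - N) = j by omega] at this)
    · rintro ⟨i, ⟨⟨hi1, hi2⟩, hi⟩, rfl⟩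
      refine ⟨⟨by omega, by omega⟩, ?_⟩
      intro hd
      exact hi ((Nat.dvd_add_right hpN).mp hd)
  have h3 : Finset.Icc 1 (2*N) = Finset.Icc 1 N ∪ Finset.Icc (N+1) (2*N) := by
    ext i; simp only [Finset.mem_Icc, Finset.mem_union]; omega
  have h4 : Disjoint (Finset.Icc 1 N) (Finset.Icc (N+1) (2*N)) := by
    rw [Finset.disjoint_left]; intro a ha hb
    simp only [Finset.mem_Icc] at ha hb; omega
  rw [S, h3, Finset.filter_union, Finset.prod_union (Finset.disjoint_filter_filter h4)]
  rw [h2, Finset.prod_image (fun a _ b _ h => by omega)]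
  rfl

lemma choose_rel (M : ℕ) (hp : 0 < p) (hM : 0 < M) :
    (2 * (p * M)).choose (p * M) * ∏ i ∈ S p (p * M), i
      = (2 * M).choose M * ∏ i ∈ S p (p * M), ((p * M) + i) := by
  set N := p * M with hN
  have e1 : (2*N).choose N * N ! * N ! = (2*N)! := by
    have := Nat.choose_mul_factorial_mul_factorial (show N ≤ 2*N by omega)
    rwa [show 2*N - N = N by omega] at this
  have e2 : (2*M).choose M * M ! * M ! = (2*M)! := by
    have := Nat.choose_mul_factorial_mul_factorial (show M ≤ 2*M by omega)
    rwa [show 2*M - M = M by omega] at this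
  have hNfact : N ! = p ^ M * M ! * ∏ i ∈ S p N, i := fact_split p hp M
  have h2N : 2 * N = p * (2 * M) := by ring
  have h2Nfact : (2*N)! = p ^ (2*M) * (2*M)! * ∏ i ∈ S p (2*N), i := by
    rw [h2N]; exact fact_split p hp (2*M)
  have hPs := P_split p N hp ⟨M, rfl⟩
  rw [hNfact, h2Nfact, hPs, ← e2] at e1
  have hPpos := S_pos p N
  have hK : 0 < p ^ M * M ! * (p ^ M * M ! * ∏ i ∈ S p N, i) := by positivity
  apply Nat.eq_of_mul_eq_mul_right hK
  calc ((2*N).choose N * ∏ i ∈ S p N, i) * (p ^ M * M ! * (p ^ M * M ! * ∏ i ∈ S p N, i))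
      = (2*N).choose N * (p ^ M * M ! * ∏ i ∈ S p N, i) * (p ^ M * M ! * ∏ i ∈ S p N, i) := by
        ring
    _ = p ^ (2*M) * ((2 * M).choose M * M ! * M !) * ((∏ i ∈ S p N, i) * ∏ i ∈ S p N, (N + i)) := e1
    _ = ((2 * M).choose M * ∏ i ∈ S p N, (N + i)) * (p ^ M * M ! * (p ^ M * M ! * ∏ i ∈ S p N, i)) := by
        ring


end nat

section rings

variable {R : Type*} [CommRing R] {ι : Type*}

lemma prod_one_add_sq (s : Finset ι) (a : ι → R) :
    (∀ i ∈ s, ∀ j ∈ s, a i * a j = 0) → ∏ i ∈ s, (1 + a i) = 1 + ∑ i ∈ s, a i := by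
  classical
  induction s using Finset.cons_induction with
  | empty => intro _; simp
  | cons x s hxs ih =>
    intro h
    rw [Finset.prod_cons, Finset.sum_cons,
      ih (fun i hi j hj => h i (by simp [hi]) j (by simp [hj]))]
    have hx : a x * ∑ i ∈ s, a i = 0 := by
      rw [Finset.mul_sum]
      exact Finset.sum_eq_zero fun i hi => h x (by simp) i (by simp [hi])
    ring_nf
    linear_combination hx

lemma prod_one_add_cube (s : Finset ι) (a : ι → R)
    (h2 : ∀ r : R, 2 * r = 0 → r = 0) :
    (∀ i ∈ s, ∀ j ∈ s, ∀ k ∈ s, a i * a j * a k = 0) →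
    ∃ E : R, ∏ i ∈ s, (1 + a i) = 1 + (∑ i ∈ s, a i) + E ∧
      2 * E = (∑ i ∈ s, a i) ^ 2 - ∑ i ∈ s, (a i) ^ 2 := by
  classical
  induction s using Finset.cons_induction with
  | empty => intro _; exact ⟨0, by simp⟩
  | cons x s hxs ih =>
    intro h
    obtain ⟨E, hP, hE⟩ := ih (fun i hi j hj k hk => h i (by simp [hi]) j (by simp [hj]) k (by simp [hk]))
    set Ss := ∑ i ∈ s, a i with hSs
    have hxS : ∀ y ∈ s, ∀ z ∈ s, a x * (a y * a z) = 0 := fun y hy z hz => by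
      rw [← mul_assoc]; exact h x (by simp) y (by simp [hy]) z (by simp [hz])
    have hxSS : a x * (Ss * Ss) = 0 := by
      rw [Finset.sum_mul_sum, Finset.mul_sum]
      refine Finset.sum_eq_zero fun y hy => ?_
      rw [Finset.mul_sum]
      exact Finset.sum_eq_zero fun z hz => hxS y hy z hz
    have hxQ : a x * ∑ i ∈ s, (a i) ^ 2 = 0 := by
      rw [Finset.mul_sum]
      exact Finset.sum_eq_zero fun y hy => by
        rw [sq]; exact hxS y hy y hy
    have hxE : a x * E = 0 := by
      apply h2
      calc 2 * (a x * E) = a x * (2 * E) := by ring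
        _ = a x * (Ss ^ 2 - ∑ i ∈ s, (a i) ^ 2) := by rw [hE]
        _ = a x * (Ss * Ss) - a x * ∑ i ∈ s, (a i) ^ 2 := by ring
        _ = 0 := by rw [hxSS, hxQ]; ring
    refine ⟨E + a x * Ss, ?_, ?_⟩
    · rw [Finset.prod_cons, Finset.sum_cons, hP]
      ring_nf
      linear_combination hxE
    · rw [Finset.sum_cons, Finset.sum_cons]
      linear_combination hE

end rings

lemma sum_sq_univ {n : ℕ} [NeZero n] (h2 : IsUnit (2 : ZMod n)) (h3 : IsUnit (3 : ZMod n)) :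
    ∑ x : ZMod n, x ^ 2 = 0 := by
  have hb : Function.Bijective (fun x : ZMod n => (2 : ZMod n) * x) := by
    simpa [IsUnit.unit_spec] using h2.unit.mulLeft_bijective
  have key : ∑ x : ZMod n, ((2 : ZMod n) * x) ^ 2 = ∑ x : ZMod n, x ^ 2 :=
    Fintype.sum_bijective _ hb _ _ (fun x => rfl)
  have h4 : (3 : ZMod n) * ∑ x : ZMod n, x ^ 2 = 0 := by
    have h5 : ∑ x : ZMod n, ((2 : ZMod n) * x) ^ 2 = 4 * ∑ x : ZMod n, x ^ 2 := by
      rw [Finset.mul_sum]; exact Finset.sum_congr rfl fun x _ => by ring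
    rw [h5] at key; linear_combination key
  exact h3.mul_right_eq_zero.mp h4

lemma isUnit_natCast_pp {q k m : ℕ} (hq : q.Prime) (h : ¬ q ∣ m) :
    IsUnit ((m : ℕ) : ZMod (q ^ k)) := by
  rw [ZMod.isUnit_iff_coprime]
  exact Nat.Coprime.pow_right k ((hq.coprime_iff_not_dvd).mpr h).symm

variable {p : ℕ}

lemma not_dvd_two (hp5 : 5 ≤ p) : ¬ p ∣ 2 := fun h => by have := Nat.le_of_dvd (by norm_num) h; omega
lemma not_dvd_three (hp5 : 5 ≤ p) : ¬ p ∣ 3 := fun h => by have := Nat.le_of_dvd (by norm_num) h; omega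

lemma unit_two (hp : p.Prime) (hp5 : 5 ≤ p) (k : ℕ) : IsUnit (2 : ZMod (p ^ k)) := by
  have := isUnit_natCast_pp (k := k) hp (not_dvd_two hp5)
  simpa using this

lemma unit_three (hp : p.Prime) (hp5 : 5 ≤ p) (k : ℕ) : IsUnit (3 : ZMod (p ^ k)) := by
  have := isUnit_natCast_pp (k := k) hp (not_dvd_three hp5)
  simpa using this

lemma not_unit_sq (hp : p.Prime) [NeZero p] {x : ZMod (p ^ 2)} (hx : ¬ IsUnit x) : x ^ 2 = 0 := by
  have hxval : ((x.val : ℕ) : ZMod (p ^ 2)) = x := ZMod.natCast_rightInverse x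
  have hdvd : p ∣ x.val := by
    by_contra hd
    exact hx (hxval ▸ isUnit_natCast_pp hp hd)
  obtain ⟨c, hc⟩ := hdvd
  rw [← hxval, hc]
  push_cast
  rw [mul_pow]
  have h0 : ((p : ZMod (p ^ 2)) ^ 2) = 0 := by
    have h1 : (((p ^ 2 : ℕ)) : ZMod (p ^ 2)) = 0 := ZMod.natCast_self _
    push_cast at h1
    exact h1
  rw [h0, zero_mul]

lemma sum_sq_units (hp : p.Prime) (hp5 : 5 ≤ p) [NeZero p] :
    ∑ x ∈ Finset.univ.filter (fun x : ZMod (p ^ 2) => IsUnit x), x ^ 2 = 0 := by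
  rw [Finset.sum_filter_of_ne (fun x _ hx => by
    by_contra hu
    exact hx (not_unit_sq hp hu))]
  exact sum_sq_univ (unit_two hp hp5 2) (unit_three hp hp5 2)

lemma sum_inv_sq_units (hp : p.Prime) (hp5 : 5 ≤ p) [NeZero p] :
    ∑ x ∈ Finset.univ.filter (fun x : ZMod (p ^ 2) => IsUnit x), (x⁻¹) ^ 2 = 0 := by
  rw [show ∑ x ∈ Finset.univ.filter (fun x : ZMod (p ^ 2) => IsUnit x), (x⁻¹) ^ 2
      = ∑ x ∈ Finset.univ.filter (fun x : ZMod (p ^ 2) => IsUnit x), x ^ 2 from ?_]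
  · exact sum_sq_units hp hp5
  · apply Finset.sum_nbij' (i := fun x => x⁻¹) (j := fun x => x⁻¹)
    · intro a ha
      simp only [Finset.mem_filter, Finset.mem_univ, true_and] at ha ⊢
      exact IsUnit.of_mul_eq_one _ (ZMod.inv_mul_of_unit a ha)
    · intro a ha
      simp only [Finset.mem_filter, Finset.mem_univ, true_and] at ha ⊢
      exact IsUnit.of_mul_eq_one _ (ZMod.inv_mul_of_unit a ha)
    · intro a ha
      simp only [Finset.mem_filter, Finset.mem_univ, true_and] at ha
      exact ZMod.inv_eq_of_mul_eq_one _ _ _ (ZMod.inv_mul_of_unit a ha)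
    · intro a ha
      simp only [Finset.mem_filter, Finset.mem_univ, true_and] at ha
      exact ZMod.inv_eq_of_mul_eq_one _ _ _ (ZMod.inv_mul_of_unit a ha)
    · intro a _
      rfl

lemma sum_S_eq_units (hp : p.Prime) [NeZero p] (f : ZMod (p ^ 2) → ZMod (p ^ 2)) :
    ∑ i ∈ S p (p ^ 2), f (i : ZMod (p ^ 2))
      = ∑ x ∈ Finset.univ.filter (fun x : ZMod (p ^ 2) => IsUnit x), f x := by
  haveI : Fact (1 < p ^ 2) := ⟨by have := hp.two_le; nlinarith⟩
  apply Finset.sum_nbij' (i := fun i => ((i : ℕ) : ZMod (p ^ 2))) (j := fun x => x.val)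
  · intro a ha
    simp only [S, Finset.mem_filter, Finset.mem_Icc] at ha
    simp only [Finset.mem_filter, Finset.mem_univ, true_and]
    exact isUnit_natCast_pp hp ha.2
  · intro x hx
    simp only [Finset.mem_filter, Finset.mem_univ, true_and] at hx
    simp only [S, Finset.mem_filter, Finset.mem_Icc]
    have hxval : ((x.val : ℕ) : ZMod (p ^ 2)) = x := ZMod.natCast_rightInverse x
    refine ⟨⟨?_, le_of_lt (ZMod.val_lt x)⟩, fun hd => ?_⟩
    · rcases Nat.eq_zero_or_pos x.val with h0 | h0
      · exfalso
        rw [ZMod.val_eq_zero] at h0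
        rw [h0] at hx
        exact not_isUnit_zero hx
      · exact h0
    · rw [← hxval, ZMod.isUnit_iff_coprime] at hx
      have h2 := Nat.Coprime.coprime_dvd_right (dvd_pow_self p two_ne_zero) hx
      rw [Nat.coprime_comm, hp.coprime_iff_not_dvd] at h2
      exact h2 hd
  · intro a ha
    simp only [S, Finset.mem_filter, Finset.mem_Icc] at ha
    apply ZMod.val_cast_of_lt
    rcases Nat.lt_or_ge a (p ^ 2) with h | h
    · exact h
    · exfalso
      have : a = p ^ 2 := le_antisymm ha.1.2 h
      exact ha.2 (this ▸ dvd_pow_self p (by norm_num))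
  · intro x hx
    exact ZMod.natCast_rightInverse x
  · intro a _
    rfl

/-- The key mod-p² fact: sum of 1/i² over i ∈ S p p² vanishes. -/
lemma sum_inv_sq_S (hp : p.Prime) (hp5 : 5 ≤ p) [NeZero p] :
    ∑ i ∈ S p (p ^ 2), (((i : ℕ) : ZMod (p ^ 2))⁻¹) ^ 2 = 0 := by
  rw [sum_S_eq_units hp (fun x => (x⁻¹) ^ 2)]
  exact sum_inv_sq_units hp hp5


section core

variable {p : ℕ}

/-- inverse of i in ZMod p^6 -/
noncomputable def u (p i : ℕ) : ZMod (p ^ 6) := ((i : ℕ) : ZMod (p ^ 6))⁻¹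

lemma mem_S {N i : ℕ} : i ∈ S p N ↔ (1 ≤ i ∧ i ≤ N) ∧ ¬ p ∣ i := by
  simp [S, Finset.mem_filter, Finset.mem_Icc]

lemma hui (hp : p.Prime) {N i : ℕ} (hi : i ∈ S p N) : ((i : ℕ) : ZMod (p ^ 6)) * u p i = 1 := by
  rw [mem_S] at hi
  exact ZMod.mul_inv_of_unit _ (isUnit_natCast_pp hp hi.2)

lemma sub_mem_S {N i : ℕ} (hpN : p ∣ N) (hi : i ∈ S p N) : N - i ∈ S p N := by
  rw [mem_S] at hi ⊢
  obtain ⟨⟨h1, h2⟩, h3⟩ := hi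
  have hiN : i ≠ N := fun h => h3 (h ▸ hpN)
  refine ⟨⟨?_, by omega⟩, fun hd => ?_⟩
  · omega
  · have := Nat.dvd_sub hpN hd
    rw [show N - (N - i) = i by omega] at this
    exact h3 this

lemma reindex {M : Type*} [AddCommMonoid M] (hp : p.Prime) {N : ℕ} (hpN : p ∣ N) (f : ℕ → M) :
    ∑ i ∈ S p N, f i = ∑ i ∈ S p N, f (N - i) := by
  apply Finset.sum_nbij' (i := fun i => N - i) (j := fun i => N - i)
  · exact fun a ha => sub_mem_S hpN ha
  · exact fun a ha => sub_mem_S hpN ha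
  · intro a ha; rw [mem_S] at ha; omega
  · intro a ha; rw [mem_S] at ha; omega
  · intro a ha; rw [mem_S] at ha
    congr 1; omega

lemma pair_core (hp : p.Prime) {N i : ℕ} (hpN : p ∣ N) (hi : i ∈ S p N) :
    u p i + u p (N - i) = ((N : ℕ) : ZMod (p ^ 6)) * (u p i * u p (N - i)) := by
  have h1 := hui hp hi
  have h2 := hui hp (sub_mem_S hpN hi)
  have hiN : i ≤ N := (mem_S.mp hi).1.2
  have hcast : ((N - i : ℕ) : ZMod (p ^ 6)) = ((N : ℕ) : ZMod (p ^ 6)) - ((i : ℕ) : ZMod (p ^ 6)) := by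
    push_cast [Nat.cast_sub hiN]; ring
  linear_combination (- u p (N - i)) * h1 - u p i * h2 + u p i * u p (N - i) * hcast

lemma pair_sum (hp : p.Prime) {N : ℕ} (hpN : p ∣ N) :
    2 * ∑ i ∈ S p N, u p i
      = ((N : ℕ) : ZMod (p ^ 6)) * ∑ i ∈ S p N, (u p i * u p (N - i)) := by
  have h := reindex hp hpN (fun i => u p i)
  calc 2 * ∑ i ∈ S p N, u p i
      = (∑ i ∈ S p N, u p i) + ∑ i ∈ S p N, u p (N - i) := by rw [← h]; ring
    _ = ∑ i ∈ S p N, (u p i + u p (N - i)) := by rw [Finset.sum_add_distrib]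
    _ = ∑ i ∈ S p N, ((N : ℕ) : ZMod (p ^ 6)) * (u p i * u p (N - i)) :=
        Finset.sum_congr rfl fun i hi => pair_core hp hpN hi
    _ = _ := by rw [Finset.mul_sum]

lemma TQ_sum (hp : p.Prime) {N : ℕ} (hpN : p ∣ N) :
    (∑ i ∈ S p N, (u p i * u p (N - i))) + ∑ i ∈ S p N, (u p i * u p i)
      = ((N : ℕ) : ZMod (p ^ 6)) * ∑ i ∈ S p N, (u p i * u p i * u p (N - i)) := by
  rw [← Finset.sum_add_distrib, Finset.mul_sum]
  refine Finset.sum_congr rfl fun i hi => ?_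
  have h := pair_core hp hpN hi
  linear_combination u p i * h


end core

lemma cast_pow_zero (p : ℕ) {a : ℕ} (ha : 6 ≤ a) : ((p ^ a : ℕ) : ZMod (p ^ 6)) = 0 :=
  (ZMod.natCast_eq_zero_iff _ _).mpr (pow_dvd_pow p ha)

lemma cancel2 (hp : p.Prime) (hp5 : 5 ≤ p) :
    ∀ r : ZMod (p ^ 6), 2 * r = 0 → r = 0 :=
  fun _ hr => ((unit_two hp hp5 6).mul_right_eq_zero).mp hr

lemma key_ge3 (hp : p.Prime) (hp5 : 5 ≤ p) (k : ℕ) (hk : 3 ≤ k) :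
    ∏ i ∈ S p (p ^ k), (1 + ((p ^ k : ℕ) : ZMod (p ^ 6)) * u p i) = 1 := by
  set R := ZMod (p ^ 6)
  set c : R := ((p ^ k : ℕ) : R) with hc
  have hcc : c * c = 0 := by
    rw [hc, ← Nat.cast_mul, ← pow_add]
    exact cast_pow_zero p (by omega)
  have hpair : ∀ i ∈ S p (p ^ k), ∀ j ∈ S p (p ^ k),
      (c * u p i) * (c * u p j) = 0 := by
    intro i _ j _
    calc (c * u p i) * (c * u p j) = (c * c) * (u p i * u p j) := by ring
      _ = 0 := by rw [hcc, zero_mul]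
  rw [prod_one_add_sq _ _ hpair]
  have hS : c * ∑ i ∈ S p (p ^ k), u p i = 0 := by
    apply cancel2 hp hp5
    have h := pair_sum hp (dvd_pow_self p (by omega : k ≠ 0)) (N := p ^ k)
    calc 2 * (c * ∑ i ∈ S p (p ^ k), u p i)
        = c * (2 * ∑ i ∈ S p (p ^ k), u p i) := by ring
      _ = c * (c * ∑ i ∈ S p (p ^ k), (u p i * u p (p ^ k - i))) := by rw [h]
      _ = (c * c) * ∑ i ∈ S p (p ^ k), (u p i * u p (p ^ k - i)) := by ring
      _ = 0 := by rw [hcc, zero_mul]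
  rw [Finset.mul_sum] at hS
  rw [hS, add_zero]




lemma kill4 (hp : p.Prime) {x : ZMod (p ^ 6)}
    (hx : (ZMod.castHom (pow_dvd_pow p (by norm_num : 2 ≤ 6)) (ZMod (p ^ 2))) x = 0) :
    ((p ^ 4 : ℕ) : ZMod (p ^ 6)) * x = 0 := by
  haveI : NeZero (p ^ 6) := ⟨by have := hp.two_le; positivity⟩
  have hxval : ((x.val : ℕ) : ZMod (p ^ 6)) = x := ZMod.natCast_rightInverse x
  rw [← hxval, map_natCast] at hx
  rw [ZMod.natCast_eq_zero_iff] at hx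
  obtain ⟨c, hc⟩ := hx
  rw [← hxval, hc, ← Nat.cast_mul, show p ^ 4 * (p ^ 2 * c) = p ^ 6 * c by ring, Nat.cast_mul,
    ZMod.natCast_self, zero_mul]

lemma key_2 (hp : p.Prime) (hp5 : 5 ≤ p) :
    ∏ i ∈ S p (p ^ 2), (1 + ((p ^ 2 : ℕ) : ZMod (p ^ 6)) * u p i) = 1 := by
  haveI : NeZero p := ⟨by omega⟩
  set R := ZMod (p ^ 6)
  set c2 : R := ((p ^ 2 : ℕ) : R) with hc2
  set c4 : R := ((p ^ 4 : ℕ) : R) with hc4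
  have hc22 : c2 * c2 = c4 := by rw [hc2, hc4, ← Nat.cast_mul, ← pow_add]
  have hc24 : c2 * c4 = 0 := by
    rw [hc2, hc4, ← Nat.cast_mul, ← pow_add]; exact cast_pow_zero p (by norm_num)
  have hc44 : c4 * c4 = 0 := by
    rw [hc4, ← Nat.cast_mul, ← pow_add]; exact cast_pow_zero p (by norm_num)
  have hpN : p ∣ p ^ 2 := dvd_pow_self p (by norm_num)
  have htriple : ∀ i ∈ S p (p ^ 2), ∀ j ∈ S p (p ^ 2), ∀ l ∈ S p (p ^ 2),
      (c2 * u p i) * (c2 * u p j) * (c2 * u p l) = 0 := by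
    intro i _ j _ l _
    have : c2 * c2 * c2 = 0 := by rw [hc22, mul_comm, hc24]
    calc (c2 * u p i) * (c2 * u p j) * (c2 * u p l)
        = (c2 * c2 * c2) * (u p i * u p j * u p l) := by ring
      _ = 0 := by rw [this, zero_mul]
  obtain ⟨E, hP, hE⟩ := prod_one_add_cube _ _ (cancel2 hp hp5) htriple
  set S1 := ∑ i ∈ S p (p ^ 2), u p i with hS1
  set T := ∑ i ∈ S p (p ^ 2), (u p i * u p (p ^ 2 - i)) with hT
  set Q2 := ∑ i ∈ S p (p ^ 2), (u p i * u p i) with hQ2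
  -- the key analytic fact : c4 * Q2 = 0
  have hQ : c4 * Q2 = 0 := by
    apply kill4 hp
    rw [hQ2, map_sum]
    have : ∀ i ∈ S p (p ^ 2),
        (ZMod.castHom (pow_dvd_pow p (by norm_num : 2 ≤ 6)) (ZMod (p ^ 2))) (u p i * u p i)
          = (((i : ℕ) : ZMod (p ^ 2))⁻¹) ^ 2 := by
      intro i hi
      have h1 : ((i : ℕ) : ZMod (p ^ 2)) *
          (ZMod.castHom (pow_dvd_pow p (by norm_num : 2 ≤ 6)) (ZMod (p ^ 2))) (u p i) = 1 := by
        have := hui hp hi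
        calc ((i : ℕ) : ZMod (p ^ 2)) * _
            = (ZMod.castHom (pow_dvd_pow p (by norm_num : 2 ≤ 6)) (ZMod (p ^ 2)))
                (((i : ℕ) : ZMod (p ^ 6)) * u p i) := by rw [map_mul, map_natCast]
          _ = 1 := by rw [this, map_one]
      have h2 : (((i : ℕ) : ZMod (p ^ 2))⁻¹)
          = (ZMod.castHom (pow_dvd_pow p (by norm_num : 2 ≤ 6)) (ZMod (p ^ 2))) (u p i) :=
        ZMod.inv_eq_of_mul_eq_one _ _ _ h1
      rw [map_mul, ← h2]; ring
    rw [Finset.sum_congr rfl this, sum_inv_sq_S hp hp5]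
  -- sum of a i = c2 * S1 ; its double :
  have hsum : ∑ i ∈ S p (p ^ 2), (c2 * u p i) = c2 * S1 := by rw [Finset.mul_sum]
  have hpair := pair_sum hp hpN
  rw [← hc2, ← hS1, ← hT] at hpair
  -- 2 * (c2 * S1) = c4 * T
  have h2S : 2 * (c2 * S1) = c4 * T := by
    calc 2 * (c2 * S1) = c2 * (2 * S1) := by ring
      _ = c2 * (c2 * T) := by rw [hpair]
      _ = c4 * T := by rw [← mul_assoc, hc22]
  -- T + Q2 = c2 * W  hence  c4 * T = - c4 * Q2
  have hTQ := TQ_sum hp hpN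
  rw [← hc2, ← hT, ← hQ2] at hTQ
  have hc4T : c4 * T = - (c4 * Q2) := by
    have hW : c4 * (T + Q2) = 0 := by
      rw [hTQ, ← mul_assoc, mul_comm c4 c2, hc24, zero_mul]
    linear_combination hW
  -- conclude S' = 0 and E = 0
  have hS' : c2 * S1 = 0 := by
    apply cancel2 hp hp5
    rw [h2S, hc4T, hQ, neg_zero]
  have hsq : (c2 * S1) ^ 2 = 0 := by rw [hS', zero_pow (by norm_num)]
  have hsumsq : ∑ i ∈ S p (p ^ 2), (c2 * u p i) ^ 2 = c4 * Q2 := by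
    rw [Finset.mul_sum]
    refine Finset.sum_congr rfl fun i _ => ?_
    calc (c2 * u p i) ^ 2 = (c2 * c2) * (u p i * u p i) := by ring
      _ = c4 * (u p i * u p i) := by rw [hc22]
  have hE0 : E = 0 := by
    apply cancel2 hp hp5
    rw [hE, hsum, hsumsq, hsq, hQ]
    ring
  rw [hP, hsum, hS', hE0]
  ring




lemma cast_prod_eq (hp : p.Prime) (hp5 : 5 ≤ p) (k : ℕ) (hk2 : 2 ≤ k) (hk4 : k ≤ 4) :
    ((∏ i ∈ S p (p ^ k), (p ^ k + i) : ℕ) : ZMod (p ^ 6))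
      = ((∏ i ∈ S p (p ^ k), i : ℕ) : ZMod (p ^ 6)) := by
  have hkey : ∏ i ∈ S p (p ^ k), (1 + ((p ^ k : ℕ) : ZMod (p ^ 6)) * u p i) = 1 := by
    rcases Nat.lt_or_ge k 3 with h | h
    · have : k = 2 := by omega
      subst this
      exact key_2 hp hp5
    · exact key_ge3 hp hp5 k h
  push_cast at hkey ⊢
  calc ∏ i ∈ S p (p ^ k), ((p : ZMod (p ^ 6)) ^ k + (i : ZMod (p ^ 6)))
      = ∏ i ∈ S p (p ^ k), ((i : ZMod (p ^ 6)) * (1 + (p : ZMod (p ^ 6)) ^ k * u p i)) := by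
        refine Finset.prod_congr rfl fun i hi => ?_
        have h := hui hp hi
        push_cast at h
        linear_combination (-((p : ZMod (p ^ 6)) ^ k)) * h
    _ = (∏ i ∈ S p (p ^ k), (i : ZMod (p ^ 6)))
          * ∏ i ∈ S p (p ^ k), (1 + (p : ZMod (p ^ 6)) ^ k * u p i) := by
        rw [Finset.prod_mul_distrib]
    _ = ∏ i ∈ S p (p ^ k), (i : ZMod (p ^ 6)) := by rw [hkey, mul_one]

lemma P_unit (hp : p.Prime) (N : ℕ) :
    IsUnit ((∏ i ∈ S p N, i : ℕ) : ZMod (p ^ 6)) := by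
  rw [ZMod.isUnit_iff_coprime]
  apply Nat.Coprime.pow_right
  apply Nat.Coprime.prod_left
  intro i hi
  rw [mem_S] at hi
  exact ((hp.coprime_iff_not_dvd).mpr hi.2).symm

lemma step (hp : p.Prime) (hp5 : 5 ≤ p) (k : ℕ) (hk2 : 2 ≤ k) (hk4 : k ≤ 4) :
    (2 * p ^ k).choose (p ^ k) ≡ (2 * p ^ (k - 1)).choose (p ^ (k - 1)) [MOD p ^ 6] := by
  have hpk : p * p ^ (k - 1) = p ^ k := by
    rw [← pow_succ']
    congr 1
    omega
  have hrel := choose_rel (p := p) (p ^ (k - 1)) hp.pos (by positivity)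
  rw [hpk] at hrel
  rw [← ZMod.natCast_eq_natCast_iff]
  have hcast : ((2 * p ^ k).choose (p ^ k) * ∏ i ∈ S p (p ^ k), i : ℕ)
      = ((2 * p ^ (k - 1)).choose (p ^ (k - 1)) * ∏ i ∈ S p (p ^ k), (p ^ k + i) : ℕ) := hrel
  have := congrArg (fun n : ℕ => (n : ZMod (p ^ 6))) hcast
  simp only [Nat.cast_mul] at this
  rw [cast_prod_eq hp hp5 k hk2 hk4] at this
  have hu := P_unit hp (p ^ k)
  apply hu.mul_left_cancel
  calc ((∏ i ∈ S p (p ^ k), i : ℕ) : ZMod (p ^ 6)) * ((2 * p ^ k).choose (p ^ k) : ZMod (p ^ 6))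
      = ((2 * p ^ k).choose (p ^ k) : ZMod (p ^ 6)) * ((∏ i ∈ S p (p ^ k), i : ℕ) : ZMod (p ^ 6)) := by ring
    _ = ((2 * p ^ (k - 1)).choose (p ^ (k - 1)) : ZMod (p ^ 6)) * ((∏ i ∈ S p (p ^ k), i : ℕ) : ZMod (p ^ 6)) := this
    _ = _ := by ring

end Jac

theorem stmt19 (p : ℕ) (hp : p.Prime) (hp5 : 5 ≤ p) (n m : ℕ) (hmn : m ≤ n) :
    (2 * p ^ 4).choose (p ^ 4) ≡ (2 * p).choose p [MOD p ^ 6] := by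
  have h4 := Jac.step hp hp5 4 (by norm_num) (by norm_num)
  have h3 := Jac.step hp hp5 3 (by norm_num) (by norm_num)
  have h2 := Jac.step hp hp5 2 (by norm_num) (by norm_num)
  norm_num at h4 h3 h2
  exact (h4.trans h3).trans h2
end
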